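/- The Hausdorff mapping preserves Gromov–Hausdorff distances between finite simplices: for positive integers p, q and reals t, s > 0, d_GH(H(t·Δ_p), H(s·Δ_q)) = d_GH(t·Δ_p, s·Δ_q). -/

import Mathlib

open Metric Set TopologicalSpace GromovHausdorff

instance {α : Type*} [TopologicalSpace α] [Nonempty α] :
    Nonempty (NonemptyCompacts α) :=
  ⟨⟨⟨{Classical.arbitrary α}, isCompact_singleton⟩, Set.singleton_nonempty _⟩⟩

noncomputable section AuxGH

open Function

/-- A wrapper around `X ⊕ Y` carrying no instances. -/
structure MyGlue (X Y : Type*) where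
  sum : X ⊕ Y

open scoped Classical in
/-- distance on the glue. -/
noncomputable def myGlueDist {X Y : Type*} [Dist X] [Dist Y] (g : X → Y) (c m : ℝ) :
    MyGlue X Y → MyGlue X Y → ℝ
  | ⟨.inl x⟩, ⟨.inl x'⟩ => dist x x'
  | ⟨.inr y⟩, ⟨.inr y'⟩ => dist y y'
  | ⟨.inl x⟩, ⟨.inr y⟩ => if g x = y then c else m
  | ⟨.inr y⟩, ⟨.inl x⟩ => if g x = y then c else m

lemma ghDist_nonneg' (X Y : Type*) [MetricSpace X] [CompactSpace X] [Nonempty X]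
    [MetricSpace Y] [CompactSpace Y] [Nonempty Y] : 0 ≤ ghDist X Y :=
  show (0 : ℝ) ≤ dist (toGHSpace X) (toGHSpace Y) from dist_nonneg

lemma ghDist_comm' (X Y : Type*) [MetricSpace X] [CompactSpace X] [Nonempty X]
    [MetricSpace Y] [CompactSpace Y] [Nonempty Y] : ghDist X Y = ghDist Y X :=
  show dist (toGHSpace X) (toGHSpace Y) = dist (toGHSpace Y) (toGHSpace X) from dist_comm _ _

/-- Upper bound on the GH distance between two "simplexes" via an explicit gluing
along a surjection. -/
lemma ghDist_le_of_glue {X Y : Type*} [MetricSpace X] [Finite X] [Nonempty X]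
    [MetricSpace Y] [Finite Y] [Nonempty Y]
    (t s c : ℝ) (ht : 0 < t) (hs : 0 < s) (hc : 0 < c)
    (hX : ∀ x y : X, x ≠ y → dist x y = t)
    (hY : ∀ x y : Y, x ≠ y → dist x y = s)
    (g : X → Y) (hg : Surjective g)
    (h1 : |t - s| ≤ 2 * c) (h3 : 2 * c ≤ max t s)
    (h4 : Injective g ∨ t ≤ 2 * c) :
    ghDist X Y ≤ c := by
  classical
  have hM1 : t ≤ max t s := le_max_left _ _
  have hM2 : s ≤ max t s := le_max_right _ _
  have habs1 : t - s ≤ 2 * c := le_trans (le_abs_self _) h1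
  have habs2 : s - t ≤ 2 * c := by rw [abs_sub_le_iff] at h1; linarith [h1.2]
  have hMle : max t s ≤ t + 2 * c := by
    rcases le_total t s with h | h
    · rw [max_eq_right h]; linarith
    · rw [max_eq_left h]; linarith
  have hMle' : max t s ≤ s + 2 * c := by
    rcases le_total t s with h | h
    · rw [max_eq_right h]; linarith
    · rw [max_eq_left h]; linarith
  set m := max t s - c with hm
  have hcm : c ≤ m := by rw [hm]; linarith
  have hm0 : 0 < m := lt_of_lt_of_le hc hcm
  have hmtc : m ≤ t + c := by rw [hm]; linarith
  have hmsc : m ≤ s + c := by rw [hm]; linarith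
  have dXle : ∀ x y : X, dist x y ≤ t := by
    intro x y
    by_cases h : x = y
    · subst h; simp [dist_self]; linarith
    · rw [hX x y h]
  have dYle : ∀ x y : Y, dist x y ≤ s := by
    intro x y
    by_cases h : x = y
    · subst h; simp [dist_self]; linarith
    · rw [hY x y h]
  -- the metric space structure on the glue
  letI : MetricSpace (MyGlue X Y) :=
    { dist := myGlueDist g c m
      dist_self := by
        rintro ⟨x | y⟩ <;> simp [myGlueDist, dist_self]
      dist_comm := by
        rintro ⟨x | y⟩ ⟨x' | y'⟩ <;> simp [myGlueDist, dist_comm]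
      dist_triangle := by
        rintro ⟨x | y⟩ ⟨x' | y'⟩ ⟨x'' | y''⟩
        · exact dist_triangle x x' x''
        · -- LLR
          show (if g x = y'' then c else m) ≤ dist x x' + (if g x' = y'' then c else m)
          by_cases h : x = x'
          · subst h; simp [dist_self]
          · rw [hX x x' h]; split_ifs <;> linarith
        · -- LRL
          show dist x x'' ≤ (if g x = y' then c else m) + (if g x'' = y' then c else m)
          by_cases h : x = x''
          · subst h; rw [dist_self]; split_ifs <;> linarith
          · rw [hX x x'' h]
            split_ifs with e1 e2 e2
            · rcases h4 with h4 | h4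
              · exact absurd (h4 (e1.trans e2.symm)) h
              · linarith
            all_goals linarith
        · -- LRR
          show (if g x = y'' then c else m) ≤ (if g x = y' then c else m) + dist y' y''
          by_cases h : y' = y''
          · subst h; simp [dist_self]
          · rw [hY y' y'' h]; split_ifs <;> linarith
        · -- RLL
          show (if g x'' = y then c else m) ≤ (if g x' = y then c else m) + dist x' x''
          by_cases h : x' = x''
          · subst h; simp [dist_self]
          · rw [hX x' x'' h]; split_ifs <;> linarith
        · -- RLR
          show dist y y'' ≤ (if g x' = y then c else m) + (if g x' = y'' then c else m)
          by_cases h : y = y''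
          · subst h; rw [dist_self]; split_ifs <;> linarith
          · rw [hY y y'' h]
            split_ifs with e1 e2 e2
            · exact absurd (e1.symm.trans e2) h
            all_goals linarith
        · -- RRL
          show (if g x'' = y then c else m) ≤ dist y y' + (if g x'' = y' then c else m)
          by_cases h : y = y'
          · subst h; simp [dist_self]
          · rw [hY y y' h]; split_ifs <;> linarith
        · exact dist_triangle y y' y''
      eq_of_dist_eq_zero := by
        rintro ⟨x | y⟩ ⟨x' | y'⟩ h
        · have : x = x' := eq_of_dist_eq_zero (by exact h)
          rw [this]
        · exfalso
          have h' : (if g x = y' then c else m) = 0 := h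
          split_ifs at h' <;> linarith
        · exfalso
          have h' : (if g x' = y then c else m) = 0 := h
          split_ifs at h' <;> linarith
        · have : y = y' := eq_of_dist_eq_zero (by exact h)
          rw [this] }
  set Φ : X → MyGlue X Y := fun x => ⟨.inl x⟩ with hΦ
  set Ψ : Y → MyGlue X Y := fun y => ⟨.inr y⟩ with hΨ
  have hΦi : Isometry Φ := Isometry.of_dist_eq fun a b => rfl
  have hΨi : Isometry Ψ := Isometry.of_dist_eq fun a b => rfl
  have key : hausdorffDist (range Φ) (range Ψ) ≤ c := by
    apply hausdorffDist_le_of_mem_dist hc.le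
    · rintro _ ⟨x, rfl⟩
      refine ⟨Ψ (g x), mem_range_self _, ?_⟩
      show (if g x = g x then c else m) ≤ c
      simp
    · rintro _ ⟨y, rfl⟩
      obtain ⟨x, rfl⟩ := hg y
      refine ⟨Φ x, mem_range_self _, ?_⟩
      show (if g x = g x then c else m) ≤ c
      simp
  exact le_trans (ghDist_le_hausdorffDist hΦi hΨi) key

/-- In the optimal coupling, every point of `X` has a point of `Y` at distance at
most the GH distance. -/
lemma exists_close_in_coupling (X Y : Type*) [MetricSpace X] [CompactSpace X] [Nonempty X]
    [MetricSpace Y] [CompactSpace Y] [Nonempty Y] (x : X) :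
    ∃ y : Y, dist (optimalGHInjl X Y x) (optimalGHInjr X Y y) ≤ ghDist X Y := by
  have hΦ := isometry_optimalGHInjl X Y
  have hΨ := isometry_optimalGHInjr X Y
  have hcΦ : IsCompact (range (optimalGHInjl X Y)) := isCompact_range hΦ.continuous
  have hcΨ : IsCompact (range (optimalGHInjr X Y)) := isCompact_range hΨ.continuous
  have hne : EMetric.hausdorffEdist (range (optimalGHInjl X Y)) (range (optimalGHInjr X Y)) ≠ ⊤ :=
    hausdorffEdist_ne_top_of_nonempty_of_bounded (range_nonempty _) (range_nonempty _)
      hcΦ.isBounded hcΨ.isBounded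
  have h1 : infDist (optimalGHInjl X Y x) (range (optimalGHInjr X Y)) ≤ ghDist X Y := by
    rw [← hausdorffDist_optimal (X := X) (Y := Y)]
    exact infDist_le_hausdorffDist_of_mem (mem_range_self _) hne
  obtain ⟨z, hz, hzd⟩ := hcΨ.exists_infDist_eq_dist (range_nonempty _) (optimalGHInjl X Y x)
  obtain ⟨y, rfl⟩ := hz
  exact ⟨y, by rw [← hzd]; exact h1⟩

/-- Lower bound: if `Y` has fewer points than `X` and all distances in `X` are `t`,
then `t ≤ 2 * ghDist X Y`. -/
lemma le_ghDist_of_card_lt {X Y : Type*} [MetricSpace X] [Finite X] [Nonempty X]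
    [MetricSpace Y] [Finite Y] [Nonempty Y]
    (t : ℝ) (hX : ∀ x y : X, x ≠ y → dist x y = t)
    (hcard : Nat.card Y < Nat.card X) :
    t ≤ 2 * ghDist X Y := by
  classical
  have f : ∀ x : X, ∃ y : Y, dist (optimalGHInjl X Y x) (optimalGHInjr X Y y) ≤ ghDist X Y :=
    exists_close_in_coupling X Y
  choose F hF using f
  letI := Fintype.ofFinite X
  letI := Fintype.ofFinite Y
  rw [Nat.card_eq_fintype_card, Nat.card_eq_fintype_card] at hcard
  obtain ⟨x, x', hxx, hFeq⟩ := Fintype.exists_ne_map_eq_of_card_lt F hcard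
  have hiso := isometry_optimalGHInjl X Y
  have h1 : dist x x' = dist (optimalGHInjl X Y x) (optimalGHInjl X Y x') := (hiso.dist_eq _ _).symm
  have h2 : dist (optimalGHInjl X Y x) (optimalGHInjl X Y x') ≤
      dist (optimalGHInjl X Y x) (optimalGHInjr X Y (F x)) +
      dist (optimalGHInjr X Y (F x)) (optimalGHInjl X Y x') := dist_triangle _ _ _
  have h3 := hF x
  have h4 : dist (optimalGHInjr X Y (F x)) (optimalGHInjl X Y x') ≤ ghDist X Y := by
    rw [dist_comm, hFeq]; exact hF x'
  rw [← hX x x' hxx, h1]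
  linarith

/-- In the optimal coupling, every point of `Y` has a point of `X` at distance at
most the GH distance. -/
lemma exists_close_in_coupling' (X Y : Type*) [MetricSpace X] [CompactSpace X] [Nonempty X]
    [MetricSpace Y] [CompactSpace Y] [Nonempty Y] (y : Y) :
    ∃ x : X, dist (optimalGHInjr X Y y) (optimalGHInjl X Y x) ≤ ghDist X Y := by
  have hΦ := isometry_optimalGHInjl X Y
  have hΨ := isometry_optimalGHInjr X Y
  have hcΦ : IsCompact (range (optimalGHInjl X Y)) := isCompact_range hΦ.continuous
  have hcΨ : IsCompact (range (optimalGHInjr X Y)) := isCompact_range hΨ.continuous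
  have hne : EMetric.hausdorffEdist (range (optimalGHInjr X Y)) (range (optimalGHInjl X Y)) ≠ ⊤ :=
    hausdorffEdist_ne_top_of_nonempty_of_bounded (range_nonempty _) (range_nonempty _)
      hcΨ.isBounded hcΦ.isBounded
  have h1 : infDist (optimalGHInjr X Y y) (range (optimalGHInjl X Y)) ≤ ghDist X Y := by
    rw [← hausdorffDist_optimal (X := X) (Y := Y), hausdorffDist_comm]
    exact infDist_le_hausdorffDist_of_mem (mem_range_self _) hne
  obtain ⟨z, hz, hzd⟩ := hcΦ.exists_infDist_eq_dist (range_nonempty _) (optimalGHInjr X Y y)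
  obtain ⟨x, rfl⟩ := hz
  exact ⟨x, by rw [← hzd]; exact h1⟩

/-- Lower bound: if `Y` has at least two points with all distances `s` and all distances
in `X` are at most `t`, then `s - t ≤ 2 * ghDist X Y`. -/
lemma sub_le_ghDist {X Y : Type*} [MetricSpace X] [Finite X] [Nonempty X]
    [MetricSpace Y] [Finite Y] [Nonempty Y]
    (t s : ℝ) (ht : 0 < t) (hX : ∀ x y : X, x ≠ y → dist x y = t)
    (hY : ∀ x y : Y, x ≠ y → dist x y = s)
    (hcard : 2 ≤ Nat.card Y) :
    s - t ≤ 2 * ghDist X Y := by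
  classical
  choose G hG using exists_close_in_coupling' X Y
  have : Nontrivial Y := Finite.one_lt_card_iff_nontrivial.1 hcard
  obtain ⟨y, y', hyy⟩ := exists_pair_ne Y
  have hisor := isometry_optimalGHInjr X Y
  have hisol := isometry_optimalGHInjl X Y
  have h1 : dist y y' = dist (optimalGHInjr X Y y) (optimalGHInjr X Y y') :=
    (hisor.dist_eq _ _).symm
  have h2 : dist (optimalGHInjr X Y y) (optimalGHInjr X Y y') ≤
      dist (optimalGHInjr X Y y) (optimalGHInjl X Y (G y)) +
      dist (optimalGHInjl X Y (G y)) (optimalGHInjl X Y (G y')) +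
      dist (optimalGHInjl X Y (G y')) (optimalGHInjr X Y y') := dist_triangle4 _ _ _ _
  have h3 := hG y
  have h4 : dist (optimalGHInjl X Y (G y')) (optimalGHInjr X Y y') ≤ ghDist X Y := by
    rw [dist_comm]; exact hG y'
  have h5 : dist (optimalGHInjl X Y (G y)) (optimalGHInjl X Y (G y')) ≤ t := by
    rw [hisol.dist_eq]
    by_cases h : G y = G y'
    · rw [h, dist_self]; linarith
    · rw [hX _ _ h]
  have h6 := hY y y' hyy
  linarith [h1, h2]

/-- GH distance between two simplexes with the same number of points. -/
lemma ghDist_simplex_eq {X Y : Type*} [MetricSpace X] [Finite X] [Nonempty X]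
    [MetricSpace Y] [Finite Y] [Nonempty Y]
    (t s : ℝ) (ht : 0 < t) (hs : 0 < s)
    (hX : ∀ x y : X, x ≠ y → dist x y = t)
    (hY : ∀ x y : Y, x ≠ y → dist x y = s)
    (hcard : Nat.card X = Nat.card Y)
    (h2 : 2 ≤ Nat.card X ∨ t = s) :
    ghDist X Y = |t - s| / 2 := by
  classical
  letI := Fintype.ofFinite X
  letI := Fintype.ofFinite Y
  rw [Nat.card_eq_fintype_card, Nat.card_eq_fintype_card] at hcard
  rw [Nat.card_eq_fintype_card] at h2
  have e : X ≃ Y := Fintype.equivOfCardEq hcard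
  by_cases hts : t = s
  · -- isometric spaces
    subst hts
    have hiso : Isometry (e : X → Y) := by
      apply Isometry.of_dist_eq
      intro a b
      by_cases h : a = b
      · subst h; simp
      · rw [hY _ _ (fun hh => h (e.injective hh)), hX _ _ h]
    have h0 : ghDist X Y ≤ hausdorffDist (range (e : X → Y)) (range (id : Y → Y)) :=
      ghDist_le_hausdorffDist hiso isometry_id
    rw [range_id, e.surjective.range_eq, hausdorffDist_self_zero] at h0
    have h0' := ghDist_nonneg' X Y
    rw [sub_self, abs_zero, zero_div]
    linarith
  · have habs : 0 < |t - s| := abs_pos.2 (sub_ne_zero.2 hts)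
    have hcard2 : 2 ≤ Fintype.card X := h2.resolve_right hts
    apply le_antisymm
    · -- upper bound via gluing
      have := ghDist_le_of_glue t s (|t - s| / 2) ht hs (by linarith) hX hY e e.surjective
        (by linarith) ?_ (Or.inl e.injective)
      · exact this
      · have h1 : |t - s| ≤ max t s := by
          rcases abs_cases (t - s) with ⟨h, _⟩ | ⟨h, _⟩ <;> rw [h]
          · calc t - s ≤ t := by linarith
              _ ≤ max t s := le_max_left _ _
          · calc -(t - s) ≤ s := by linarith
              _ ≤ max t s := le_max_right _ _
        linarith
    · -- lower bound
      have hY2 : 2 ≤ Nat.card Y := by rw [Nat.card_eq_fintype_card, ← hcard]; exact hcard2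
      have hX2 : 2 ≤ Nat.card X := by rw [Nat.card_eq_fintype_card]; exact hcard2
      have l1 : s - t ≤ 2 * ghDist X Y := sub_le_ghDist t s ht hX hY hY2
      have l2 : t - s ≤ 2 * ghDist Y X := sub_le_ghDist s t hs hY hX hX2
      rw [← ghDist_comm' X Y] at l2
      rcases abs_cases (t - s) with ⟨h, _⟩ | ⟨h, _⟩ <;> rw [h] <;> linarith

/-- GH distance between two simplexes when the first one has more points. -/
lemma ghDist_simplex_lt {X Y : Type*} [MetricSpace X] [Finite X] [Nonempty X]
    [MetricSpace Y] [Finite Y] [Nonempty Y]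
    (t s : ℝ) (ht : 0 < t) (hs : 0 < s)
    (hX : ∀ x y : X, x ≠ y → dist x y = t)
    (hY : ∀ x y : Y, x ≠ y → dist x y = s)
    (hcard : Nat.card Y < Nat.card X)
    (h2 : 2 ≤ Nat.card Y ∨ s ≤ t) :
    ghDist X Y = max t |t - s| / 2 := by
  classical
  have hc : 0 < max t |t - s| := lt_of_lt_of_le ht (le_max_left _ _)
  apply le_antisymm
  · -- upper bound
    letI := Fintype.ofFinite X
    letI := Fintype.ofFinite Y
    have hle : Fintype.card Y ≤ Fintype.card X := by
      rw [Nat.card_eq_fintype_card, Nat.card_eq_fintype_card] at hcard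
      exact hcard.le
    obtain ⟨i⟩ := Function.Embedding.nonempty_of_card_le hle
    have hg : Function.Surjective (Function.invFun i) :=
      Function.invFun_surjective i.injective
    have habs : |t - s| ≤ max t s := by
      rcases abs_cases (t - s) with ⟨h, _⟩ | ⟨h, _⟩ <;> rw [h]
      · calc t - s ≤ t := by linarith
          _ ≤ max t s := le_max_left _ _
      · calc -(t - s) ≤ s := by linarith
          _ ≤ max t s := le_max_right _ _
    have := ghDist_le_of_glue t s (max t |t - s| / 2) ht hs (by linarith)
      hX hY (Function.invFun i) hg ?_ ?_ (Or.inr ?_)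
    · exact this
    · calc |t - s| ≤ max t |t - s| := le_max_right _ _
        _ = 2 * (max t |t - s| / 2) := by ring
    · rw [show 2 * (max t |t - s| / 2) = max t |t - s| by ring]
      exact max_le (le_max_left _ _) habs
    · calc t ≤ max t |t - s| := le_max_left _ _
        _ = 2 * (max t |t - s| / 2) := by ring
  · -- lower bound
    have l1 : t ≤ 2 * ghDist X Y := le_ghDist_of_card_lt t hX hcard
    have l2 : s - t ≤ 2 * ghDist X Y := by
      rcases h2 with h2 | h2
      · exact sub_le_ghDist t s ht hX hY h2
      · have := ghDist_nonneg' X Y; linarith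
    have : max t |t - s| ≤ 2 * ghDist X Y := by
      apply max_le l1
      rcases abs_cases (t - s) with ⟨h, _⟩ | ⟨h, _⟩ <;> rw [h] <;> linarith
    linarith

end AuxGH

noncomputable section AuxHyper

instance myNCFinite {α : Type*} [TopologicalSpace α] [Finite α] :
    Finite (NonemptyCompacts α) :=
  Finite.of_injective (fun A => (A : Set α)) fun A B h => NonemptyCompacts.ext h

/-- The hyperspace of a finite space with `n` points has `2 ^ n - 1` points. -/
lemma myNCCard (α : Type*) [TopologicalSpace α] [T1Space α] [Finite α] :
    Nat.card (NonemptyCompacts α) = 2 ^ Nat.card α - 1 := by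
  classical
  have e : NonemptyCompacts α ≃ {S : Set α // S.Nonempty} :=
    { toFun := fun A => ⟨A, A.nonempty⟩
      invFun := fun S => ⟨⟨S.1, S.1.toFinite.isCompact⟩, S.2⟩
      left_inv := fun A => rfl
      right_inv := fun S => rfl }
  rw [Nat.card_congr e]
  letI := Fintype.ofFinite α
  rw [Nat.card_eq_fintype_card, Nat.card_eq_fintype_card]
  have : Fintype.card {S : Set α // S.Nonempty} = Fintype.card {S : Set α // ¬ S = ∅} :=
    Fintype.card_congr (Equiv.subtypeEquivRight fun S => Set.nonempty_iff_ne_empty)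
  rw [this, Fintype.card_subtype_compl, Fintype.card_subtype_eq, Fintype.card_set]

/-- Distances in the hyperspace of a simplex. -/
lemma myNCDist {α : Type*} [MetricSpace α] [Finite α] (t : ℝ) (ht : 0 < t)
    (hd : ∀ x y : α, x ≠ y → dist x y = t) :
    ∀ A B : NonemptyCompacts α, A ≠ B → dist A B = t := by
  intro A B hAB
  rw [NonemptyCompacts.dist_eq]
  have hfin : EMetric.hausdorffEdist (A : Set α) (B : Set α) ≠ ⊤ :=
    hausdorffEdist_ne_top_of_nonempty_of_bounded A.nonempty B.nonempty
      A.isCompact.isBounded B.isCompact.isBounded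
  have hub : ∀ (S T : Set α), S.Nonempty → T.Nonempty →
      (∀ x ∈ S, ∃ y ∈ T, dist x y ≤ t) := by
    intro S T hS hT x hx
    obtain ⟨y, hy⟩ := hT
    refine ⟨y, hy, ?_⟩
    by_cases h : x = y
    · subst h; rw [dist_self]; linarith
    · rw [hd x y h]
  have key : ∀ x : α, ∀ (T : Set α), IsCompact T → T.Nonempty → x ∉ T → t ≤ infDist x T := by
    intro x T hTc hTne hxT
    obtain ⟨y, hy, hyd⟩ := hTc.exists_infDist_eq_dist hTne x
    rw [hyd, hd x y (fun h => hxT (h ▸ hy))]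
  apply le_antisymm
  · exact hausdorffDist_le_of_mem_dist ht.le
      (hub A B A.nonempty B.nonempty) (hub B A B.nonempty A.nonempty)
  · have hne : (A : Set α) ≠ (B : Set α) := fun h => hAB (NonemptyCompacts.ext h)
    rcases (em ((A : Set α) ⊆ (B : Set α))) with hsub | hsub
    rotate_left
    · obtain ⟨x, hxA, hxB⟩ := Set.not_subset.1 hsub
      calc t ≤ infDist x (B : Set α) := key x B B.isCompact B.nonempty hxB
        _ ≤ hausdorffDist (A : Set α) (B : Set α) :=
          infDist_le_hausdorffDist_of_mem hxA hfin
    · have hsub' : ¬ (B : Set α) ⊆ (A : Set α) := fun h =>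
        hne (Set.Subset.antisymm hsub h)
      obtain ⟨x, hxB, hxA⟩ := Set.not_subset.1 hsub'
      calc t ≤ infDist x (A : Set α) := key x A A.isCompact A.nonempty hxA
        _ ≤ hausdorffDist (A : Set α) (B : Set α) := by
          rw [hausdorffDist_comm]
          exact infDist_le_hausdorffDist_of_mem hxB (by rwa [EMetric.hausdorffEdist_comm])

end AuxHyper

theorem stmt_11 (p q : ℕ) (hp : 0 < p) (hq : 0 < q) (t s : ℝ) (ht : 0 < t) (hs : 0 < s)
    (P Q : Type*) [MetricSpace P] [Finite P] [Nonempty P]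
    [MetricSpace Q] [Finite Q] [Nonempty Q]
    (hPcard : Nat.card P = p) (hPdist : ∀ x y : P, x ≠ y → dist x y = t)
    (hQcard : Nat.card Q = q) (hQdist : ∀ x y : Q, x ≠ y → dist x y = s) :
    ghDist (NonemptyCompacts P) (NonemptyCompacts Q) = ghDist P Q := by
  classical
  subst hPcard
  subst hQcard
  -- replace the (irrelevant) distance value on a one-point space
  set s' : ℝ := if Nat.card Q = 1 then t else s with hs'def
  set t' : ℝ := if Nat.card P = 1 then s' else t with ht'def
  have hs' : 0 < s' := by rw [hs'def]; split_ifs <;> assumption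
  have ht' : 0 < t' := by
    rw [ht'def]; split_ifs <;> assumption
  have hQd' : ∀ x y : Q, x ≠ y → dist x y = s' := by
    intro x y h
    by_cases h1 : Nat.card Q = 1
    · haveI := (Nat.card_eq_one_iff_unique.1 h1).1
      exact absurd (Subsingleton.elim x y) h
    · rw [hs'def, if_neg h1]; exact hQdist x y h
  have hPd' : ∀ x y : P, x ≠ y → dist x y = t' := by
    intro x y h
    by_cases h1 : Nat.card P = 1
    · haveI := (Nat.card_eq_one_iff_unique.1 h1).1
      exact absurd (Subsingleton.elim x y) h
    · rw [ht'def, if_neg h1]; exact hPdist x y h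
  have hNCP : ∀ A B : NonemptyCompacts P, A ≠ B → dist A B = t' := myNCDist t' ht' hPd'
  have hNCQ : ∀ A B : NonemptyCompacts Q, A ≠ B → dist A B = s' := myNCDist s' hs' hQd'
  have hCP : Nat.card (NonemptyCompacts P) = 2 ^ Nat.card P - 1 := myNCCard P
  have hCQ : Nat.card (NonemptyCompacts Q) = 2 ^ Nat.card Q - 1 := myNCCard Q
  have hPpos : 0 < Nat.card P := hp
  have hQpos : 0 < Nat.card Q := hq
  have pow_ge : ∀ n : ℕ, 2 ≤ n → 3 ≤ 2 ^ n - 1 := by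
    intro n hn
    have : 4 ≤ 2 ^ n := by
      calc (4 : ℕ) = 2 ^ 2 := rfl
        _ ≤ 2 ^ n := Nat.pow_le_pow_right (by norm_num) hn
    omega
  rcases lt_trichotomy (Nat.card P) (Nat.card Q) with hlt | heq | hgt
  · -- card P < card Q
    have h2 : 2 ≤ Nat.card P ∨ t' ≤ s' := by
      by_cases h1 : Nat.card P = 1
      · right; rw [ht'def, if_pos h1]
      · left; omega
    have h2NC : 2 ≤ Nat.card (NonemptyCompacts P) ∨ t' ≤ s' := by
      by_cases h1 : Nat.card P = 1
      · right; rw [ht'def, if_pos h1]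
      · left; rw [hCP]; have := pow_ge (Nat.card P) (by omega); omega
    have hltNC : Nat.card (NonemptyCompacts P) < Nat.card (NonemptyCompacts Q) := by
      rw [hCP, hCQ]
      have h1 : 2 ^ Nat.card P < 2 ^ Nat.card Q :=
        Nat.pow_lt_pow_right (by norm_num) hlt
      have h0 : 0 < 2 ^ Nat.card P := Nat.pow_pos (by norm_num)
      omega
    rw [ghDist_comm' P Q, ghDist_comm' (NonemptyCompacts P) (NonemptyCompacts Q)]
    rw [ghDist_simplex_lt s' t' hs' ht' hQd' hPd' hlt h2,
      ghDist_simplex_lt s' t' hs' ht' hNCQ hNCP hltNC h2NC]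
  · -- card P = card Q
    have h2 : 2 ≤ Nat.card P ∨ t' = s' := by
      by_cases h1 : Nat.card P = 1
      · right; rw [ht'def, if_pos h1]
      · left; omega
    have h2NC : 2 ≤ Nat.card (NonemptyCompacts P) ∨ t' = s' := by
      by_cases h1 : Nat.card P = 1
      · right; rw [ht'def, if_pos h1]
      · left; rw [hCP]; have := pow_ge (Nat.card P) (by omega); omega
    have heqNC : Nat.card (NonemptyCompacts P) = Nat.card (NonemptyCompacts Q) := by
      rw [hCP, hCQ, heq]
    rw [ghDist_simplex_eq t' s' ht' hs' hPd' hQd' heq h2,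
      ghDist_simplex_eq t' s' ht' hs' hNCP hNCQ heqNC h2NC]
  · -- card Q < card P
    have h2 : 2 ≤ Nat.card Q ∨ s' ≤ t' := by
      by_cases h1 : Nat.card Q = 1
      · right
        have hP1 : ¬ Nat.card P = 1 := by omega
        rw [ht'def, if_neg hP1, hs'def, if_pos h1]
      · left; omega
    have h2NC : 2 ≤ Nat.card (NonemptyCompacts Q) ∨ s' ≤ t' := by
      by_cases h1 : Nat.card Q = 1
      · right
        have hP1 : ¬ Nat.card P = 1 := by omega
        rw [ht'def, if_neg hP1, hs'def, if_pos h1]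
      · left; rw [hCQ]; have := pow_ge (Nat.card Q) (by omega); omega
    have hgtNC : Nat.card (NonemptyCompacts Q) < Nat.card (NonemptyCompacts P) := by
      rw [hCP, hCQ]
      have h1 : 2 ^ Nat.card Q < 2 ^ Nat.card P :=
        Nat.pow_lt_pow_right (by norm_num) hgt
      have h0 : 0 < 2 ^ Nat.card Q := Nat.pow_pos (by norm_num)
      omega
    rw [ghDist_simplex_lt t' s' ht' hs' hPd' hQd' hgt h2,
      ghDist_simplex_lt t' s' ht' hs' hNCP hNCQ hgtNC h2NC]
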